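/- For every r ≥ 1 and every multi-index (s₁,…,s_r) of nonnegative integers, there exists a polynomial P with rational coefficients such that for all complex z with |z| < 1, Σ_{n₁>…>n_r>0} n₁^{s₁}⋯n_r^{s_r} z^{n₁} = P(1/(1−z)). In other words, every polylogarithm at negative multi-indices Li^-_{s₁,…,s_r} belongs to the polynomial ring ℂ[1/(1−z)]. -/

import Mathlib

open Finset Polynomial

/-- The polylogarithm at nonnegative integer multi-indices (polylogarithm "at negative
indices") `Li⁻_{s₁,…,s_r}(z) = Σ_{n₁>…>n_r>0} n₁^{s₁}⋯n_r^{s_r} z^{n₁}`; for `r = 0`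
(the empty index) it is the constant function `1`. -/
noncomputable def LiNeg (r : ℕ) (s : Fin r → ℕ) (z : ℂ) : ℂ :=
  ∑' n : {n : Fin r → ℕ // StrictAnti n ∧ ∀ i, 0 < n i},
    (∏ i, ((n.1 i : ℂ)) ^ (s i)) * (if h : 0 < r then z ^ (n.1 ⟨0, h⟩) else 1)


lemma faulhaber_poly (p : ℕ) : ∃ P : Polynomial ℚ, ∀ N : ℕ,
    ∑ k ∈ Finset.range N, (k:ℚ)^p = P.eval (N:ℚ) := by
  refine ⟨∑ i ∈ range (p+1), Polynomial.C (_root_.bernoulli i * ((p+1).choose i) / (p+1)) * X^(p+1-i), fun N => ?_⟩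
  rw [sum_range_pow]
  simp [eval_finset_sum, mul_div_assoc, mul_assoc, div_mul_eq_mul_div]

lemma sum_range_eval (Q : Polynomial ℚ) : ∃ P : Polynomial ℚ, ∀ N : ℕ,
    ∑ j ∈ Finset.range N, Q.eval (j:ℚ) = P.eval (N:ℚ) := by
  choose F hF using faulhaber_poly
  refine ⟨∑ k ∈ range (Q.natDegree+1), Polynomial.C (Q.coeff k) * F k, fun N => ?_⟩
  simp only [eval_finset_sum, eval_mul, eval_C, ← hF, Finset.mul_sum]
  rw [Finset.sum_comm]
  congr 1; ext j
  rw [eval_eq_sum_range]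

lemma sum_pow_geom (k : ℕ) {z : ℂ} (hz : ‖z‖ < 1) :
    Summable (fun N : ℕ => (N:ℂ)^k * z^N) :=
  summable_pow_mul_geometric_of_norm_lt_one k hz

lemma mono_tsum : ∀ k : ℕ, ∃ P : Polynomial ℚ, ∀ z : ℂ, ‖z‖ < 1 →
    ∑' N : ℕ, (N:ℂ)^k * z^N = Polynomial.aeval (1/(1-z)) P := by
  intro k
  induction k using Nat.strong_induction_on with
  | _ k IH =>
  rcases Nat.eq_zero_or_pos k with hk | hk
  · subst hk
    refine ⟨X, fun z hz => ?_⟩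
    simp only [pow_zero, one_mul, tsum_geometric_of_norm_lt_one hz, aeval_X, one_div]
  · set P : ℕ → Polynomial ℚ := fun j => if h : j < k then Classical.choose (IH j h) else 0
      with hPdef
    have hP : ∀ j (h : j < k), ∀ z : ℂ, ‖z‖ < 1 →
        ∑' N : ℕ, (N:ℂ)^j * z^N = Polynomial.aeval (1/(1-z)) (P j) := by
      intro j h
      simpa [hPdef, dif_pos h] using Classical.choose_spec (IH j h)
    refine ⟨(X - 1) * ∑ j ∈ range k, Polynomial.C (k.choose j : ℚ) * P j, fun z hz => ?_⟩
    have h1z : (1 : ℂ) - z ≠ 0 := by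
      intro h
      have : z = 1 := by linear_combination -h
      simp [this] at hz
    have hshift : ∀ j : ℕ, Summable (fun N : ℕ => ((N:ℂ)+1)^j * z^(N+1)) := by
      intro j
      have := (summable_nat_add_iff 1).2 (sum_pow_geom j hz)
      convert this using 2 with N
      push_cast
      rfl
      simp
    have key : (1 - z) * (∑' N : ℕ, (N:ℂ)^k * z^N)
        = z * ∑ j ∈ range k, (k.choose j : ℂ) * ∑' N : ℕ, (N:ℂ)^j * z^N := by
      have e1 : ∑' N : ℕ, (N:ℂ)^k * z^N = ∑' N : ℕ, ((N:ℂ)+1)^k * z^(N+1) := by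
        rw [Summable.tsum_eq_zero_add (sum_pow_geom k hz)]
        have h0 : ((0:ℕ):ℂ)^k * z^0 = 0 := by simp [hk.ne']
        rw [h0, zero_add]
        congr 1 with N
        push_cast
        ring
      have e2 : z * (∑' N : ℕ, (N:ℂ)^k * z^N) = ∑' N : ℕ, (N:ℂ)^k * z^(N+1) := by
        rw [← tsum_mul_left]
        congr 1 with N
        ring
      have e3 : ∀ j : ℕ, Summable (fun N : ℕ => (N:ℂ)^j * z^(N+1)) := by
        intro j
        simpa [mul_assoc, pow_succ] using (sum_pow_geom j hz).mul_right z
      calc (1 - z) * (∑' N : ℕ, (N:ℂ)^k * z^N)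
          = (∑' N : ℕ, ((N:ℂ)+1)^k * z^(N+1)) - ∑' N : ℕ, (N:ℂ)^k * z^(N+1) := by
            rw [sub_mul, one_mul, ← e2, ← e1]
        _ = ∑' N : ℕ, (((N:ℂ)+1)^k - (N:ℂ)^k) * z^(N+1) := by
            rw [← Summable.tsum_sub (hshift k) (e3 k)]
            congr 1 with N
            ring
        _ = ∑' N : ℕ, ∑ j ∈ range k, (k.choose j : ℂ) * ((N:ℂ)^j * z^(N+1)) := by
            congr 1 with N
            rw [add_pow, Finset.sum_range_succ]
            simp only [one_pow, mul_one, Nat.choose_self, Nat.cast_one, add_sub_cancel_right]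
            rw [Finset.sum_mul]
            congr 1 with j
            ring
        _ = ∑ j ∈ range k, (k.choose j : ℂ) * ∑' N : ℕ, (N:ℂ)^j * z^(N+1) := by
            rw [Summable.tsum_finsetSum (fun j _ => ((e3 j).mul_left _))]
            congr 1 with j
            rw [← tsum_mul_left]
        _ = z * ∑ j ∈ range k, (k.choose j : ℂ) * ∑' N : ℕ, (N:ℂ)^j * z^N := by
            rw [Finset.mul_sum]
            congr 1 with j
            rw [← tsum_mul_left, ← tsum_mul_left, ← tsum_mul_left]
            congr 1 with N
            ring
    have hw : (1/(1-z)) * z = 1/(1-z) - 1 := by field_simp; ring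
    have main : ∑' N : ℕ, (N:ℂ)^k * z^N
        = (1-z)⁻¹ * (z * ∑ j ∈ range k, (k.choose j : ℂ) * ∑' N : ℕ, (N:ℂ)^j * z^N) := by
      rw [← key, ← mul_assoc, inv_mul_cancel₀ h1z, one_mul]
    have expand : ∀ j ∈ range k, (k.choose j : ℂ) * ∑' N : ℕ, (N:ℂ)^j * z^N
        = Polynomial.aeval (1/(1-z)) (Polynomial.C (k.choose j : ℚ) * P j) := by
      intro j hj
      rw [map_mul, aeval_C, ← hP j (Finset.mem_range.mp hj) z hz]
      simp
    rw [main, ← mul_assoc, ← one_div, hw, map_mul, map_sub, aeval_X, map_one, map_sum]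
    congr 1
    exact Finset.sum_congr rfl expand

noncomputable def DecSet (r N : ℕ) : Finset (Fin r → ℕ) :=
  @Finset.filter _ (fun n => StrictAnti n ∧ ∀ i, 0 < n i) (Classical.decPred _)
    (Fintype.piFinset fun _ => Finset.range N)

lemma mem_DecSet {r N : ℕ} {n : Fin r → ℕ} :
    n ∈ DecSet r N ↔ (∀ i, n i < N) ∧ StrictAnti n ∧ ∀ i, 0 < n i := by
  simp [DecSet, Fintype.mem_piFinset]

noncomputable def dd (r : ℕ) (s : Fin r → ℕ) (N : ℕ) : ℂ :=
  ∑ n ∈ DecSet r N, ∏ i, (n i : ℂ)^(s i)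

lemma dd_zero (s : Fin 0 → ℕ) (N : ℕ) : dd 0 s N = 1 := by
  have h : DecSet 0 N = {(Fin.elim0 : Fin 0 → ℕ)} := by
    ext n
    simp only [mem_DecSet, Finset.mem_singleton]
    constructor
    · intro _
      funext i
      exact i.elim0
    · rintro rfl
      exact ⟨fun i => i.elim0, fun a => a.elim0, fun i => i.elim0⟩
  rw [dd, h]
  simp

lemma strictAnti_cons {r : ℕ} {j : ℕ} {m : Fin r → ℕ} (hm : StrictAnti m)
    (hlt : ∀ i, m i < j) : StrictAnti (Fin.cons j m : Fin (r+1) → ℕ) := by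
  intro a b hab
  induction b using Fin.cases with
  | zero => exact absurd hab (Fin.not_lt_zero a).elim
  | succ l =>
    induction a using Fin.cases with
    | zero => simpa using hlt l
    | succ i =>
      simp only [Fin.cons_succ]
      exact hm (Fin.succ_lt_succ_iff.mp hab)

lemma strictAnti_tail {r : ℕ} {n : Fin (r+1) → ℕ} (hn : StrictAnti n) :
    StrictAnti (Fin.tail n) := fun a b hab => hn (Fin.succ_lt_succ_iff.mpr hab)

lemma dd_succ (r : ℕ) (s : Fin (r+1) → ℕ) (N : ℕ) :
    dd (r+1) s N = ∑ j ∈ Finset.Ico 1 N, (j:ℂ)^(s 0) * dd r (s ∘ Fin.succ) j := by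
  have key : ∑ n ∈ DecSet (r+1) N, ∏ i, ((n i : ℂ))^(s i)
      = ∑ p ∈ (Finset.Ico 1 N).sigma (fun j => DecSet r j),
          (p.1:ℂ)^(s 0) * ∏ i, (p.2 i : ℂ)^(s i.succ) := by
    refine Finset.sum_nbij' (fun n => ⟨n 0, Fin.tail n⟩) (fun p => Fin.cons p.1 p.2)
      ?_ ?_ ?_ ?_ ?_
    · intro n hn
      obtain ⟨hlt, hsa, hpos⟩ := mem_DecSet.mp hn
      refine Finset.mem_sigma.mpr ⟨Finset.mem_Ico.mpr ⟨hpos 0, hlt 0⟩, mem_DecSet.mpr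
        ⟨fun i => ?_, strictAnti_tail hsa, fun i => hpos _⟩⟩
      exact hsa (Fin.succ_pos i)
    · intro p hp
      obtain ⟨hj, hm⟩ := Finset.mem_sigma.mp hp
      obtain ⟨h1, h2⟩ := Finset.mem_Ico.mp hj
      obtain ⟨hlt, hsa, hpos⟩ := mem_DecSet.mp hm
      refine mem_DecSet.mpr ⟨fun i => ?_, strictAnti_cons hsa hlt, fun i => ?_⟩
      · induction i using Fin.cases with
        | zero => simpa using h2
        | succ l => simpa using (hlt l).trans h2
      · induction i using Fin.cases with
        | zero => simpa using Nat.pos_of_ne_zero (by omega : p.1 ≠ 0)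
        | succ l => simpa using hpos l
    · intro n _
      simp [Fin.cons_self_tail]
    · intro p _
      simp
    · intro n _
      rw [Fin.prod_univ_succ]
      simp [Fin.tail]
  rw [dd, key, Finset.sum_sigma]
  congr 1 with j
  rw [dd, Finset.mul_sum]
  rfl
lemma aeval_natCast_eq (R : Polynomial ℚ) (n : ℕ) :
    Polynomial.aeval ((n:ℕ):ℂ) R = algebraMap ℚ ℂ (R.eval (n:ℚ)) := by
  rw [show ((n:ℕ):ℂ) = algebraMap ℚ ℂ ((n:ℕ):ℚ) by simp,
    aeval_algebraMap_apply_eq_algebraMap_eval]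

lemma sum_range_aevalC (R : Polynomial ℚ) : ∃ P : Polynomial ℚ, ∀ N : ℕ,
    ∑ j ∈ Finset.range N, Polynomial.aeval ((j:ℕ):ℂ) R = Polynomial.aeval ((N:ℕ):ℂ) P := by
  obtain ⟨P, hP⟩ := sum_range_eval R
  refine ⟨P, fun N => ?_⟩
  have := congrArg (algebraMap ℚ ℂ) (hP N)
  simpa [map_sum, aeval_natCast_eq] using this

lemma dd_poly : ∀ r (s : Fin r → ℕ), ∃ Q : Polynomial ℚ, ∀ N : ℕ, 1 ≤ N →
    dd r s N = Polynomial.aeval ((N:ℕ):ℂ) Q := by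
  intro r
  induction r with
  | zero => exact fun s => ⟨1, fun N _ => by simp [dd_zero]⟩
  | succ r IH =>
    intro s
    obtain ⟨Q, hQ⟩ := IH (s ∘ Fin.succ)
    obtain ⟨P, hP⟩ := sum_range_aevalC (X^(s 0) * Q)
    refine ⟨P - Polynomial.C ((X^(s 0) * Q : Polynomial ℚ).eval 0), fun N hN => ?_⟩
    rw [dd_succ]
    have h1 : ∀ j ∈ Finset.Ico 1 N, (j:ℂ)^(s 0) * dd r (s ∘ Fin.succ) j
        = Polynomial.aeval ((j:ℕ):ℂ) (X^(s 0) * Q) := by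
      intro j hj
      rw [hQ j (Finset.mem_Ico.mp hj).1, map_mul, aeval_X_pow]
    rw [Finset.sum_congr rfl h1]
    have h2 : ∑ j ∈ Finset.range N, Polynomial.aeval ((j:ℕ):ℂ) (X^(s 0)*Q)
        = Polynomial.aeval ((0:ℕ):ℂ) (X^(s 0)*Q)
          + ∑ j ∈ Finset.Ico 1 N, Polynomial.aeval ((j:ℕ):ℂ) (X^(s 0)*Q) := by
      rw [Finset.range_eq_Ico]
      exact Finset.sum_eq_sum_Ico_succ_bot hN _
    have h3 := hP N
    rw [h2] at h3
    rw [map_sub, aeval_C, ← h3, aeval_natCast_eq]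
    push_cast
    ring

lemma summable_shift_pow (m : ℕ) {w : ℝ} (hw : ‖w‖ < 1) :
    Summable (fun N : ℕ => ((N:ℝ)+1)^m * w^N) := by
  have h : ∀ N : ℕ, ((N:ℝ)+1)^m * w^N
      = ∑ j ∈ Finset.range (m+1), (m.choose j : ℝ) * ((N:ℝ)^j * w^N) := by
    intro N
    rw [add_pow, Finset.sum_mul]
    congr 1 with j
    ring
  exact (summable_sum (fun j (_ : j ∈ Finset.range (m+1)) =>
    (summable_pow_mul_geometric_of_norm_lt_one j hw).mul_left ((m.choose j : ℝ)))).congr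
    (fun N => (h N).symm)

lemma aeval_expand (R : Polynomial ℚ) (z : ℂ) (N : ℕ) :
    Polynomial.aeval ((N:ℕ):ℂ) R * z^N
      = ∑ k ∈ Finset.range (R.natDegree+1),
          algebraMap ℚ ℂ (R.coeff k) * ((N:ℂ)^k * z^N) := by
  rw [Polynomial.aeval_eq_sum_range, Finset.sum_mul]
  congr 1 with k
  rw [Algebra.smul_def]
  ring

lemma summable_aeval (R : Polynomial ℚ) {z : ℂ} (hz : ‖z‖ < 1) :
    Summable (fun N : ℕ => Polynomial.aeval ((N:ℕ):ℂ) R * z^N) :=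
  (summable_sum (fun k (_ : k ∈ Finset.range (R.natDegree+1)) =>
    (sum_pow_geom k hz).mul_left (algebraMap ℚ ℂ (R.coeff k)))).congr
    (fun N => (aeval_expand R z N).symm)

lemma poly_tsum (R : Polynomial ℚ) : ∃ P : Polynomial ℚ, ∀ z : ℂ, ‖z‖ < 1 →
    ∑' N : ℕ, Polynomial.aeval ((N:ℕ):ℂ) R * z^N = Polynomial.aeval (1/(1-z)) P := by
  choose F hF using mono_tsum
  refine ⟨∑ k ∈ Finset.range (R.natDegree+1), Polynomial.C (R.coeff k) * F k, fun z hz => ?_⟩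
  calc ∑' N : ℕ, Polynomial.aeval ((N:ℕ):ℂ) R * z^N
      = ∑' N : ℕ, ∑ k ∈ Finset.range (R.natDegree+1),
          algebraMap ℚ ℂ (R.coeff k) * ((N:ℂ)^k * z^N) := tsum_congr (aeval_expand R z)
    _ = ∑ k ∈ Finset.range (R.natDegree+1),
          ∑' N : ℕ, algebraMap ℚ ℂ (R.coeff k) * ((N:ℂ)^k * z^N) :=
        Summable.tsum_finsetSum (fun k _ => (sum_pow_geom k hz).mul_left _)
    _ = ∑ k ∈ Finset.range (R.natDegree+1),
          algebraMap ℚ ℂ (R.coeff k) * Polynomial.aeval (1/(1-z)) (F k) := by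
        congr 1 with k
        rw [tsum_mul_left, hF k z hz]
    _ = _ := by
        rw [map_sum]
        congr 1 with k
        rw [map_mul, aeval_C]

lemma fiber_equiv_exists (r N : ℕ) (hN : 0 < N) :
    ∃ E : {x : {n : Fin (r+1) → ℕ // StrictAnti n ∧ ∀ i, 0 < n i} // x.1 0 = N}
          ≃ {m : Fin r → ℕ // m ∈ DecSet r N},
      ∀ x, (x.1.1 : Fin (r+1) → ℕ) = Fin.cons N (E x).1 := by
  have tailmem : ∀ x : {x : {n : Fin (r+1) → ℕ // StrictAnti n ∧ ∀ i, 0 < n i} // x.1 0 = N},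
      Fin.tail x.1.1 ∈ DecSet r N := by
    rintro ⟨⟨n, hsa, hpos⟩, h0⟩
    exact mem_DecSet.mpr ⟨fun i => h0 ▸ hsa (Fin.succ_pos i), strictAnti_tail hsa,
      fun i => hpos _⟩
  have consmem : ∀ m ∈ DecSet r N,
      StrictAnti (Fin.cons N m : Fin (r+1) → ℕ)
        ∧ ∀ i, 0 < (Fin.cons N m : Fin (r+1) → ℕ) i := by
    intro m hm
    obtain ⟨hlt, hsa, hpos⟩ := mem_DecSet.mp hm
    refine ⟨strictAnti_cons hsa hlt, fun i => ?_⟩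
    induction i using Fin.cases with
    | zero => simpa using hN
    | succ l => simpa using hpos l
  refine ⟨⟨fun x => ⟨Fin.tail x.1.1, tailmem x⟩,
    fun m => ⟨⟨Fin.cons N m.1, consmem m.1 m.2⟩, by simp⟩, ?_, ?_⟩, ?_⟩
  · rintro ⟨⟨n, hn⟩, h0⟩
    apply Subtype.ext
    apply Subtype.ext
    show Fin.cons N (Fin.tail n) = n
    rw [← h0]
    exact Fin.cons_self_tail n
  · intro m
    apply Subtype.ext
    simp
  · rintro ⟨⟨n, hn⟩, h0⟩
    show n = Fin.cons N (Fin.tail n)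
    rw [← h0]
    exact (Fin.cons_self_tail n).symm

set_option maxHeartbeats 2000000 in
/-- For every `r ≥ 1` and every multi-index `(s₁,…,s_r)` of nonnegative
integers, there is a polynomial `P` with rational coefficients such that for all `|z| < 1`,
`Li⁻_{s₁,…,s_r}(z) = P(1/(1−z))`; i.e. every polylogarithm at negative multi-indices lies
in `ℂ[1/(1−z)]`. -/
theorem liNeg_mem_polynomial_ring_of_inv_one_sub
    (r : ℕ) (hr : 1 ≤ r) (s : Fin r → ℕ) :
    ∃ P : Polynomial ℚ, ∀ z : ℂ, ‖z‖ < 1 →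
      LiNeg r s z = Polynomial.aeval (1 / (1 - z)) P := by
  obtain ⟨r, rfl⟩ : ∃ r', r = r' + 1 := ⟨r - 1, by omega⟩
  obtain ⟨Q, hQ⟩ := dd_poly r (s ∘ Fin.succ)
  set R : Polynomial ℚ := X^(s 0) * Q with hR
  obtain ⟨P, hP⟩ := poly_tsum R
  refine ⟨P - Polynomial.C (R.eval 0), fun z hzabs => ?_⟩
  have hz : ‖z‖ < 1 := hzabs
  set G : (Fin (r+1) → ℕ) → ℂ := fun n => (∏ i, ((n i : ℂ)) ^ (s i)) * z ^ (n 0) with hG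
  set T := {n : Fin (r+1) → ℕ // StrictAnti n ∧ ∀ i, 0 < n i} with hT
  have hLi : LiNeg (r+1) s z = ∑' n : T, G n.1 := by
    rw [LiNeg]
    apply tsum_congr
    intro n
    rw [dif_pos (Nat.succ_pos r)]
    rfl
  set K : ℕ := ∑ i, s i with hK
  have hempty : IsEmpty {x : T // x.1 0 = 0} := by
    constructor
    rintro ⟨⟨n, _, hpos⟩, h0⟩
    exact (hpos 0).ne' h0
  have hfinite : ∀ N : ℕ, Finite {x : T // x.1 0 = N} := by
    intro N
    rcases Nat.eq_zero_or_pos N with h0 | hN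
    · subst h0; haveI := hempty; infer_instance
    · obtain ⟨E, -⟩ := fiber_equiv_exists r N hN
      exact Finite.of_equiv _ E.symm
  -- value of each fiber sum
  have hfiberval : ∀ N : ℕ, 0 < N → ∑' x : {x : T // x.1 0 = N}, G x.1.1
      = (((N:ℂ))^(s 0) * dd r (s ∘ Fin.succ) N) * z^N := by
    intro N hN
    obtain ⟨E, hE⟩ := fiber_equiv_exists r N hN
    letI : Fintype {x : T // x.1 0 = N} := Fintype.ofEquiv _ E.symm
    rw [tsum_fintype,
      Fintype.sum_equiv E _ (fun m => G (Fin.cons N m.1)) (fun x => by rw [hE x]),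
      Finset.sum_coe_sort (DecSet r N) (fun m => G (Fin.cons N m)),
      dd, Finset.mul_sum, Finset.sum_mul]
    congr 1 with m
    rw [hG]
    simp only [Fin.cons_zero]
    rw [Fin.prod_univ_succ]
    simp only [Fin.cons_succ, Fin.cons_zero, Function.comp_apply]
  -- norm bound of each fiber sum
  have hnormbound : ∀ N : ℕ, (∑' x : {x : T // x.1 0 = N}, ‖G x.1.1‖)
      ≤ ((N:ℝ)+1)^(r + K) * ‖z‖^N := by
    intro N
    rcases Nat.eq_zero_or_pos N with h0 | hN
    · subst h0
      haveI := hempty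
      rw [tsum_empty]
      positivity
    · obtain ⟨E, hE⟩ := fiber_equiv_exists r N hN
      letI : Fintype {x : T // x.1 0 = N} := Fintype.ofEquiv _ E.symm
      rw [tsum_fintype,
        Fintype.sum_equiv E _ (fun m => ‖G (Fin.cons N m.1)‖) (fun x => by rw [hE x]),
        Finset.sum_coe_sort (DecSet r N) (fun m => ‖G (Fin.cons N m)‖)]
      have hterm : ∀ m ∈ DecSet r N, ‖G (Fin.cons N m)‖ ≤ (N:ℝ)^K * ‖z‖^N := by
        intro m hm
        obtain ⟨hlt, -, -⟩ := mem_DecSet.mp hm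
        rw [hG]
        simp only [norm_mul, norm_prod, norm_pow, Fin.cons_zero]
        have h1 : ∀ i : Fin (r+1), ‖(((Fin.cons N m : Fin (r+1) → ℕ) i : ℕ):ℂ)‖^(s i) ≤ (N:ℝ)^(s i) := by
          intro i
          rw [Complex.norm_natCast]
          apply pow_le_pow_left₀ (Nat.cast_nonneg _)
          apply Nat.cast_le.mpr
          induction i using Fin.cases with
          | zero => simp
          | succ l => simpa using (hlt l).le
        calc (∏ i, ‖(((Fin.cons N m : Fin (r+1) → ℕ) i : ℕ):ℂ)‖^(s i)) * ‖z‖^N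
            ≤ (∏ i : Fin (r+1), (N:ℝ)^(s i)) * ‖z‖^N := by
              apply mul_le_mul_of_nonneg_right _ (by positivity)
              exact Finset.prod_le_prod (fun i _ => by positivity) (fun i _ => h1 i)
          _ = (N:ℝ)^K * ‖z‖^N := by rw [Finset.prod_pow_eq_pow_sum]
      calc ∑ m ∈ DecSet r N, ‖G (Fin.cons N m)‖
          ≤ ∑ _m ∈ DecSet r N, (N:ℝ)^K * ‖z‖^N := Finset.sum_le_sum hterm
        _ = (DecSet r N).card * ((N:ℝ)^K * ‖z‖^N) := by
            rw [Finset.sum_const, nsmul_eq_mul]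
        _ ≤ ((N:ℝ)+1)^(r + K) * ‖z‖^N := by
            have hcard : (DecSet r N).card ≤ N^r := by
              calc (DecSet r N).card ≤ (Fintype.piFinset fun _ : Fin r => Finset.range N).card := by
                    apply Finset.card_le_card
                    intro n hn
                    obtain ⟨hlt, -, -⟩ := mem_DecSet.mp hn
                    exact Fintype.mem_piFinset.mpr fun i => Finset.mem_range.mpr (hlt i)
                _ = N^r := by simp [Fintype.card_piFinset]
            have h2 : ((DecSet r N).card : ℝ) * (N:ℝ)^K ≤ ((N:ℝ)+1)^(r+K) := by
              calc ((DecSet r N).card : ℝ) * (N:ℝ)^K ≤ (N:ℝ)^r * (N:ℝ)^K := by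
                    apply mul_le_mul_of_nonneg_right _ (by positivity)
                    exact_mod_cast Nat.cast_le.mpr hcard
                _ = (N:ℝ)^(r+K) := by rw [pow_add]
                _ ≤ ((N:ℝ)+1)^(r+K) := by
                    apply pow_le_pow_left₀ (Nat.cast_nonneg _)
                    linarith
            calc ((DecSet r N).card : ℝ) * ((N:ℝ)^K * ‖z‖^N)
                = (((DecSet r N).card : ℝ) * (N:ℝ)^K) * ‖z‖^N := by ring
              _ ≤ ((N:ℝ)+1)^(r+K) * ‖z‖^N :=
                  mul_le_mul_of_nonneg_right h2 (by positivity)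
  -- summability
  set σ := Equiv.sigmaFiberEquiv (fun n : T => n.1 0) with hσdef
  have hwnorm : ‖(‖z‖)‖ < 1 := by rwa [Real.norm_eq_abs, abs_norm]
  have hnorm : Summable (fun n : T => ‖G n.1‖) := by
    rw [← σ.summable_iff]
    refine (summable_sigma_of_nonneg (fun p => norm_nonneg _)).mpr ⟨fun N => ?_, ?_⟩
    · haveI := hfinite N
      exact Summable.of_finite
    · apply Summable.of_nonneg_of_le (fun N => tsum_nonneg fun _ => norm_nonneg _)
        (fun N => hnormbound N) (summable_shift_pow (r+K) hwnorm)
  have hsum : Summable (fun n : T => G n.1) := hnorm.of_norm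
  have hσsum : Summable (fun p : (Σ N : ℕ, {x : T // x.1 0 = N}) => G (σ p).1) :=
    σ.summable_iff.mpr hsum
  have step1 : (∑' n : T, G n.1) = ∑' N : ℕ, ∑' x : {x : T // x.1 0 = N}, G x.1.1 := by
    rw [← σ.tsum_eq (fun n : T => G n.1), Summable.tsum_sigma hσsum]
    rfl
  have step2 : (∑' N : ℕ, ∑' x : {x : T // x.1 0 = N}, G x.1.1)
      = ∑' N : ℕ, (Polynomial.aeval ((N:ℕ):ℂ) R * z^N
          - if N = 0 then Polynomial.aeval ((0:ℕ):ℂ) R else 0) := by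
    apply tsum_congr
    intro N
    rcases Nat.eq_zero_or_pos N with h0 | hN
    · subst h0
      haveI := hempty
      rw [tsum_empty]
      simp
    · rw [hfiberval N hN, hQ N hN, if_neg hN.ne', sub_zero, hR, map_mul, aeval_X_pow]
  have hδ : Summable (fun N : ℕ => if N = 0 then Polynomial.aeval ((0:ℕ):ℂ) R else 0) :=
    summable_of_ne_finset_zero (s := {0}) (fun b hb => if_neg (by simpa using hb))
  rw [hLi, step1, step2, Summable.tsum_sub (summable_aeval R hz) hδ, hP z hz, tsum_ite_eq,
    map_sub, aeval_C, aeval_natCast_eq]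
  norm_num
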